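/- Let E be a real normed vector space, F a real inner product space, m : E → F, and x ∈ E. Suppose m is (Fréchet) differentiable at x and ‖m(x)‖ ≥ 1. Then the map g : E → F defined by g(y) = m(y)/‖m(y)‖ is differentiable at x, and the operator norm of its derivative satisfies ‖Dg(x)‖ ≤ ‖Dm(x)‖. -/

import Mathlib

open RealInnerProductSpace

lemma hasFDerivAt_norm_comp {E F : Type*} [NormedAddCommGroup E] [NormedSpace ℝ E]
    [NormedAddCommGroup F] [InnerProductSpace ℝ F]
    {f : E → F} {f' : E →L[ℝ] F} {x : E} (hf : HasFDerivAt f f' x) (h0 : f x ≠ 0) :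
    HasFDerivAt (fun y => ‖f y‖) (‖f x‖⁻¹ • ((innerSL ℝ (f x)).comp f')) x := by
  have hsq : HasFDerivAt (fun y => ‖f y‖ ^ 2) (2 • (innerSL ℝ (f x)).comp f') x := hf.norm_sq
  have hne : ‖f x‖ ^ 2 ≠ 0 := pow_ne_zero 2 (norm_ne_zero_iff.2 h0)
  have h := (Real.hasDerivAt_sqrt hne).comp_hasFDerivAt x hsq
  have hfun : (fun y => Real.sqrt (‖f y‖ ^ 2)) = fun y => ‖f y‖ := by
    ext y; rw [Real.sqrt_sq (norm_nonneg _)]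
  rw [Function.comp_def, hfun] at h
  refine h.congr_fderiv ?_
  ext v
  have hpos : (0:ℝ) < ‖f x‖ := norm_pos_iff.2 h0
  simp only [ContinuousLinearMap.smul_apply, ContinuousLinearMap.coe_smul', Pi.smul_apply,
    Real.sqrt_sq (norm_nonneg (f x)), smul_eq_mul]
  push_cast
  field_simp
  ring

/-- Pointwise projection property: if `m` is differentiable at `x` with `‖m x‖ ≥ 1`,
then the normalized map `y ↦ m y / ‖m y‖` is differentiable at `x` and the operator
norm of its derivative is at most that of the derivative of `m`. -/
theorem stmt15 {E F : Type*} [NormedAddCommGroup E] [NormedSpace ℝ E]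
    [NormedAddCommGroup F] [InnerProductSpace ℝ F]
    (m : E → F) (x : E) (hdiff : DifferentiableAt ℝ m x) (hnorm : 1 ≤ ‖m x‖) :
    DifferentiableAt ℝ (fun y => ‖m y‖⁻¹ • m y) x ∧
      ‖fderiv ℝ (fun y => ‖m y‖⁻¹ • m y) x‖ ≤ ‖fderiv ℝ m x‖ := by
  set n : ℝ := ‖m x‖ with hn
  have hnpos : (0:ℝ) < n := lt_of_lt_of_le one_pos hnorm
  have h0 : m x ≠ 0 := fun h => by simp [hn, h] at hnpos
  set u : E →L[ℝ] F := fderiv ℝ m x with hu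
  have hm : HasFDerivAt m u x := hdiff.hasFDerivAt
  have hN : HasFDerivAt (fun y => ‖m y‖) (n⁻¹ • ((innerSL ℝ (m x)).comp u)) x :=
    hasFDerivAt_norm_comp hm h0
  have hninv : HasFDerivAt (fun y => ‖m y‖⁻¹)
      ((-(n ^ 2)⁻¹) • (n⁻¹ • ((innerSL ℝ (m x)).comp u))) x :=
    (hasDerivAt_inv hnpos.ne').comp_hasFDerivAt x hN
  have hg : HasFDerivAt (fun y => ‖m y‖⁻¹ • m y)
      (n⁻¹ • u + ((-(n ^ 2)⁻¹) • (n⁻¹ • ((innerSL ℝ (m x)).comp u))).smulRight (m x)) x :=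
    hninv.smul hm
  refine ⟨hg.differentiableAt, ?_⟩
  rw [hg.fderiv]
  refine ContinuousLinearMap.opNorm_le_bound _ (norm_nonneg u) fun v => ?_
  set w : F := u v with hw
  set t : ℝ := (n ^ 2)⁻¹ * ⟪m x, w⟫ with ht
  have hDv : (n⁻¹ • u + ((-(n ^ 2)⁻¹) • (n⁻¹ • ((innerSL ℝ (m x)).comp u))).smulRight (m x)) v
      = n⁻¹ • (w - t • m x) := by
    simp only [ContinuousLinearMap.add_apply, ContinuousLinearMap.smul_apply,
      ContinuousLinearMap.smulRight_apply, ContinuousLinearMap.coe_comp', Function.comp_apply,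
      innerSL_apply_apply, smul_sub, smul_smul, ht, ← hw]
    rw [sub_eq_add_neg, ← neg_smul]
    congr 1
    rw [smul_eq_mul]
    ring
  rw [hDv]
  have horth : ⟪t • m x, w - t • m x⟫ = 0 := by
    rw [inner_smul_left, inner_sub_right, inner_smul_right, real_inner_self_eq_norm_sq, ← hn, ht]
    field_simp
    simp
  have hpyth : ‖w - t • m x‖ ≤ ‖w‖ := by
    have h2 : ‖w‖ ^ 2 = ‖t • m x‖ ^ 2 + ‖w - t • m x‖ ^ 2 := by
      have h3 := norm_add_sq_real (t • m x) (w - t • m x)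
      rw [horth, show t • m x + (w - t • m x) = w from by abel] at h3
      linarith
    nlinarith [norm_nonneg (w - t • m x), norm_nonneg w, norm_nonneg (t • m x)]
  calc ‖n⁻¹ • (w - t • m x)‖ = n⁻¹ * ‖w - t • m x‖ := by
        rw [norm_smul, Real.norm_eq_abs, abs_of_pos (inv_pos.2 hnpos)]
    _ ≤ 1 * ‖w‖ := by
        apply mul_le_mul _ hpyth (norm_nonneg _) zero_le_one
        exact inv_le_one_of_one_le₀ hnorm
    _ = ‖w‖ := one_mul _
    _ ≤ ‖u‖ * ‖v‖ := u.le_opNorm v
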